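/- Let K >= 4 be an even integer, and set a = 2K-3, b = 2K-1, m = K^2 - (7/2)K + 2 (an integer since K is even). Let Delta_K be the closed triangle in R^2 with vertices (-1/a, 0), (m-K+2, 0), and (m, (K-2)b/2). Then the number of integer lattice points contained in Delta_K is exactly m(m+1)/2 + 1. -/

import Mathlib

open Finset

lemma ediv_eq_k {a q k : ℤ} (hq : 0 < q) (h1 : q*k ≤ a) (h2 : a < q*(k+1)) : a / q = k := by
  have h : a = (a - q*k) + k*q := by ring
  rw [h, Int.add_mul_ediv_right _ _ hq.ne',
    Int.ediv_eq_zero_of_lt (by linarith) (by linarith), zero_add]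

lemma ico_split {a b c : ℤ} (hab : a ≤ b) (hbc : b ≤ c) (f : ℤ → ℤ) :
    ∑ t ∈ Ico a c, f t = ∑ t ∈ Ico a b, f t + ∑ t ∈ Ico b c, f t := by
  rw [← Finset.Ico_union_Ico_eq_Ico hab hbc,
    Finset.sum_union (Finset.Ico_disjoint_Ico_consecutive a b c)]

lemma ico_shift (a b : ℤ) (f : ℤ → ℤ) :
    ∑ t ∈ Ico a (a + b), f t = ∑ r ∈ Ico (0:ℤ) b, f (a + r) := by
  rw [show Ico a (a+b) = Ico (a+0) (a+b) by ring_nf, ← Finset.map_add_left_Ico 0 b a,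
    Finset.sum_map]
  simp [addLeftEmbedding]

lemma const_sum {a b : ℤ} (v : ℤ) (hab : a ≤ b) (f : ℤ → ℤ)
    (h : ∀ t, a ≤ t → t < b → f t = v) :
    ∑ t ∈ Ico a b, f t = (b - a) * v := by
  have h2 : ∑ t ∈ Ico a b, f t = ∑ _t ∈ Ico a b, v :=
    Finset.sum_congr rfl (fun t ht => by rw [Finset.mem_Ico] at ht; exact h t ht.1 ht.2)
  rw [h2, Finset.sum_const, Int.card_Ico, nsmul_eq_mul, Int.toNat_of_nonneg (by linarith)]

lemma blocks (p q : ℤ) (hq : 0 < q) (n : ℕ) :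
    2 * ∑ t ∈ Ico (0:ℤ) (n*q), (p*t)/q
      = p*q*n*((n:ℤ)-1) + 2*n*(∑ r ∈ Ico (0:ℤ) q, (p*r)/q) := by
  induction n with
  | zero => simp
  | succ n ih =>
    have h2 : (0:ℤ) ≤ (n:ℤ)*q := by positivity
    push_cast
    rw [show ((n:ℤ)+1)*q = (n:ℤ)*q + q by ring, ico_split h2 (by linarith), ico_shift]
    have h3 : ∀ r ∈ Ico (0:ℤ) q, (p*((n:ℤ)*q + r))/q = (p*r)/q + p*n := by
      intro r _
      rw [show p*((n:ℤ)*q + r) = p*r + (p*n)*q by ring, Int.add_mul_ediv_right _ _ hq.ne']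
    rw [Finset.sum_congr rfl h3, Finset.sum_add_distrib, Finset.sum_const, Int.card_Ico,
      nsmul_eq_mul, Int.toNat_of_nonneg (by omega)]
    push_cast at ih ⊢
    linarith [ih]

lemma S0A (u : ℤ) (hu : 0 ≤ u) : ∑ r ∈ Ico (0:ℤ) (2*u+1), (2*r)/(2*u+1) = u := by
  rw [ico_split (b := u+1) (by linarith) (by linarith),
    const_sum 0 (by linarith) _ (fun t h1 h2 => Int.ediv_eq_zero_of_lt (by linarith) (by linarith)),
    const_sum 1 (by linarith) _ (fun t h1 h2 =>
      ediv_eq_k (k := 1) (by linarith) (by linarith) (by linarith))]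
  ring

lemma S0B (v : ℤ) (hv : 1 ≤ v) : ∑ r ∈ Ico (0:ℤ) (2*v+1), (-2*r)/(2*v+1) = -3*v := by
  rw [ico_split (b := 1) (by linarith) (by linarith),
    ico_split (a := 1) (b := v+1) (by linarith) (by linarith),
    const_sum 0 (by linarith) _ (fun t h1 h2 => by
      rw [show t = 0 by omega]; simp),
    const_sum (-1) (by linarith) _ (fun t h1 h2 =>
      ediv_eq_k (k := -1) (by linarith) (by linarith) (by linarith)),
    const_sum (-2) (by linarith) _ (fun t h1 h2 =>
      ediv_eq_k (k := -2) (by linarith) (by linarith) (by linarith))]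
  ring

lemma gauss (N : ℤ) (hN : 0 ≤ N) : 2 * ∑ t ∈ Ico (0:ℤ) N, t = N * (N - 1) := by
  obtain ⟨n, rfl⟩ : ∃ n : ℕ, N = (n : ℤ) := ⟨N.toNat, (Int.toNat_of_nonneg hN).symm⟩
  clear hN
  induction n with
  | zero => simp
  | succ n ih =>
    push_cast
    rw [ico_split (b := (n:ℤ)) (by positivity) (by linarith),
      const_sum (a := (n:ℤ)) (b := (n:ℤ)+1) (n:ℤ) (by linarith) _ (fun t h1 h2 => by omega)]
    push_cast at ih
    linarith [ih]

lemma main_sum (n : ℕ) (hn : 1 ≤ n) :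
    2 * ∑ y ∈ Ico (0:ℤ) ((n:ℤ)*(4*(n:ℤ)+3) + 1),
        ((4*(n:ℤ)^2 - (n:ℤ) - 1) + 1 + (2*y)/(4*(n:ℤ)+3) - ((4*(n:ℤ)-1)*(y+1))/(4*(n:ℤ)+1))
      = (4*(n:ℤ)^2+(n:ℤ)-1) * ((4*(n:ℤ)^2+(n:ℤ)-1) + 1) + 2 := by
  set N : ℤ := (n:ℤ) with hN
  have hN1 : 1 ≤ N := by rw [hN]; exact_mod_cast hn
  have hb : (0:ℤ) < 4*N+3 := by linarith
  have hd : (0:ℤ) < 4*N+1 := by linarith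
  -- split integrand
  rw [Finset.sum_sub_distrib, Finset.sum_add_distrib]
  -- constant part
  have e0 : ∑ _y ∈ Ico (0:ℤ) (N*(4*N+3) + 1), ((4*N^2 - N - 1) + 1) = (N*(4*N+3)+1) * (4*N^2 - N) := by
    rw [const_sum (4*N^2 - N) (by nlinarith) _ (fun t _ _ => by ring)]
    ring
  -- Σ1
  have e1 : 2 * ∑ y ∈ Ico (0:ℤ) (N*(4*N+3) + 1), (2*y)/(4*N+3)
      = 2*(4*N+3)*N*(N-1) + 2*N*(2*N+1) + 2*(2*N) := by
    rw [ico_split (b := N*(4*N+3)) (by positivity) (by linarith),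
      const_sum (a := N*(4*N+3)) (b := N*(4*N+3)+1) (2*N) (by linarith) _ (fun t h1 h2 => by
        rw [show t = N*(4*N+3) by omega, show 2*(N*(4*N+3)) = (2*N)*(4*N+3) by ring,
          Int.mul_ediv_cancel _ hb.ne'])]
    have hblocks := blocks 2 (4*N+3) hb n
    rw [← hN] at hblocks
    have hS0 := S0A (2*N+1) (by linarith)
    rw [show 2*(2*N+1)+1 = 4*N+3 by ring] at hS0
    rw [hS0] at hblocks
    linarith [hblocks]
  -- Σ2
  have e2 : 2 * ∑ y ∈ Ico (0:ℤ) (N*(4*N+3) + 1), ((4*N-1)*(y+1))/(4*N+1)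
      = ((N*(4*N+3)+1) * (N*(4*N+3)+2))
        + ((-2)*(4*N+1)*N*(N-1) + 2*N*(-6*N) + 2*((2*N+2)*(-2*N) + (-(2*N) - 2))) := by
    have hsplit : ∀ y ∈ Ico (0:ℤ) (N*(4*N+3) + 1),
        ((4*N-1)*(y+1))/(4*N+1) = (-2*(y+1))/(4*N+1) + (y+1) := by
      intro y _
      rw [show (4*N-1)*(y+1) = -2*(y+1) + (y+1)*(4*N+1) by ring,
        Int.add_mul_ediv_right _ _ hd.ne']
    rw [Finset.sum_congr rfl hsplit, Finset.sum_add_distrib]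
    -- linear part: ∑ (y+1) over Ico 0 (Y+1)
    have elin : 2 * ∑ y ∈ Ico (0:ℤ) (N*(4*N+3) + 1), (y+1)
        = (N*(4*N+3)+1) * (N*(4*N+3)+2) := by
      rw [Finset.sum_add_distrib, Finset.sum_const, Int.card_Ico, nsmul_eq_mul,
        Int.toNat_of_nonneg (by nlinarith)]
      have := gauss (N*(4*N+3)+1) (by nlinarith)
      nlinarith [this]
    -- floor part
    have efl : 2 * ∑ y ∈ Ico (0:ℤ) (N*(4*N+3) + 1), (-2*(y+1))/(4*N+1)
        = (-2)*(4*N+1)*N*(N-1) + 2*N*(-6*N) + 2*((2*N+2)*(-2*N) + (-(2*N) - 2)) := by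
      -- shift: y+1 = t, t ∈ Ico 1 (Y+2)
      have hsh := ico_shift 1 (N*(4*N+3)+1) (fun t => (-2*t)/(4*N+1))
      have hcg : ∑ r ∈ Ico (0:ℤ) (N*(4*N+3)+1), (-2*(1+r))/(4*N+1)
          = ∑ y ∈ Ico (0:ℤ) (N*(4*N+3)+1), (-2*(y+1))/(4*N+1) := by
        exact Finset.sum_congr rfl (fun y _ => by ring_nf)
      rw [← hcg, ← hsh]
      -- now sum over Ico 1 (Y+2); extend to Ico 0 (Y+2)
      have hext : ∑ t ∈ Ico (0:ℤ) (1 + (N*(4*N+3)+1)), (-2*t)/(4*N+1)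
          = ∑ t ∈ Ico (1:ℤ) (1 + (N*(4*N+3)+1)), (-2*t)/(4*N+1) := by
        rw [ico_split (b := 1) (by linarith) (by nlinarith),
          const_sum 0 (by linarith) _ (fun t h1 h2 => by rw [show t = 0 by omega]; simp)]
        ring
      rw [← hext]
      -- Y+2 = 1 + (Y+1) = N*(4N+1) + (2N+2)
      rw [show (1:ℤ) + (N*(4*N+3)+1) = N*(4*N+1) + (2*N+2) by ring,
        ico_split (b := N*(4*N+1)) (by nlinarith) (by nlinarith), ico_shift]
      have htail : ∀ r ∈ Ico (0:ℤ) (2*N+2),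
          (-2*(N*(4*N+1) + r))/(4*N+1) = (-2*r)/(4*N+1) + (-2*N) := by
        intro r _
        rw [show -2*(N*(4*N+1) + r) = -2*r + (-2*N)*(4*N+1) by ring,
          Int.add_mul_ediv_right _ _ hd.ne']
      have hmini : ∑ r ∈ Ico (0:ℤ) (2*N+2), (-2*r)/(4*N+1) = -(2*N) - 2 := by
        rw [ico_split (b := 1) (by linarith) (by linarith),
          ico_split (a := 1) (b := 2*N+1) (by linarith) (by linarith),
          const_sum 0 (by linarith) _ (fun t h1 h2 => by rw [show t = 0 by omega]; simp),
          const_sum (-1) (by linarith) _ (fun t h1 h2 =>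
            ediv_eq_k (k := -1) hd (by linarith) (by linarith)),
          const_sum (-2) (by linarith) _ (fun t h1 h2 =>
            ediv_eq_k (k := -2) hd (by linarith) (by linarith))]
        ring
      rw [Finset.sum_congr rfl htail, Finset.sum_add_distrib, hmini, Finset.sum_const,
        Int.card_Ico, nsmul_eq_mul, Int.toNat_of_nonneg (by linarith)]
      have hblocks := blocks (-2) (4*N+1) hd n
      rw [← hN] at hblocks
      have hS0 := S0B (2*N) (by linarith)
      rw [show 2*(2*N)+1 = 4*N+1 by ring] at hS0
      have hcg2 : ∑ r ∈ Ico (0:ℤ) (4*N+1), (-2*r)/(4*N+1)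
          = ∑ r ∈ Ico (0:ℤ) (4*N+1), ((-2)*r)/(4*N+1) :=
        Finset.sum_congr rfl (fun r _ => by norm_num)
      rw [← hcg2, hS0] at hblocks
      have hcg3 : ∑ t ∈ Ico (0:ℤ) (N*(4*N+1)), (-2*t)/(4*N+1)
          = ∑ t ∈ Ico (0:ℤ) (N*(4*N+1)), ((-2)*t)/(4*N+1) :=
        Finset.sum_congr rfl (fun r _ => by norm_num)
      have hNq : ((n:ℕ):ℤ)*(4*N+1) = N*(4*N+1) := by rw [← hN]
      rw [hcg3]
      rw [← hNq] at hblocks ⊢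
      linarith [hblocks]
    linarith [elin, efl]
  rw [e0]
  linarith [e1, e2]


set_option maxHeartbeats 1000000 in
lemma hull_char (k mr : ℝ) (hk : 4 ≤ k) (hmr : 2*mr = 2*k^2 - 7*k + 4) (p : ℝ × ℝ) :
    p ∈ convexHull ℝ ({(-1/(2*k-3), 0), (mr - k + 2, 0), (mr, (k-2)*(2*k-1)/2)} : Set (ℝ×ℝ))
    ↔ (0 ≤ p.2 ∧ (2*k-5)*p.2 ≤ (2*k-3)*p.1 + 1 ∧
        (2*k-1)*p.1 ≤ (2*k-1)*(mr-k+2) + 2*p.2) := by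
  obtain rfl : mr = (2*k^2 - 7*k + 4)/2 := by linarith
  have ha : (0:ℝ) < 2*k-3 := by linarith
  have hb : (0:ℝ) < 2*k-1 := by linarith
  have hk2 : (0:ℝ) < k-2 := by linarith
  have hM : (0:ℝ) ≤ (2*k^2 - 7*k + 4)/2 - k + 2 := by nlinarith
  have hP2 : (0:ℝ) < (2*k-3)*(2*k^2-9*k+8)+2 := by nlinarith
  constructor
  · -- forward: hull ⊆ halfplanes
    intro hp
    have hsub : convexHull ℝ ({(-1/(2*k-3), 0), ((2*k^2 - 7*k + 4)/2 - k + 2, 0),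
          ((2*k^2 - 7*k + 4)/2, (k-2)*(2*k-1)/2)} : Set (ℝ×ℝ))
        ⊆ {q : ℝ×ℝ | 0 ≤ q.2 ∧ (2*k-5)*q.2 ≤ (2*k-3)*q.1 + 1 ∧
            (2*k-1)*q.1 ≤ (2*k-1)*((2*k^2 - 7*k + 4)/2-k+2) + 2*q.2} := by
      apply convexHull_min
      · rintro q (rfl | rfl | rfl)
        · refine ⟨le_refl 0, ?_, ?_⟩
          · have h1 : (2*k-3)*(-1/(2*k-3)) = -1 := by field_simp
            simp only [Set.mem_setOf_eq]
            rw [h1]; norm_num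
          · have h5 : (0:ℝ) ≤ (2*k-1)/(2*k-3) := div_nonneg (by linarith) (by linarith)
            have h6 : (2*k-1)*(-1/(2*k-3)) = -((2*k-1)/(2*k-3)) := by ring
            simp only [Set.mem_setOf_eq]
            rw [h6]
            nlinarith
        · refine ⟨le_refl 0, ?_, ?_⟩
          · simp only [Set.mem_setOf_eq]; nlinarith
          · simp only [Set.mem_setOf_eq]; nlinarith
        · refine ⟨?_, ?_, ?_⟩
          · simp only [Set.mem_setOf_eq]; nlinarith
          · simp only [Set.mem_setOf_eq]; nlinarith
          · simp only [Set.mem_setOf_eq]; nlinarith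
      · have e1 : {q : ℝ×ℝ | 0 ≤ q.2 ∧ (2*k-5)*q.2 ≤ (2*k-3)*q.1 + 1 ∧
            (2*k-1)*q.1 ≤ (2*k-1)*((2*k^2 - 7*k + 4)/2-k+2) + 2*q.2}
            = {q : ℝ×ℝ | 0 ≤ q.2} ∩ ({q : ℝ×ℝ | (2*k-5)*q.2 - (2*k-3)*q.1 ≤ 1} ∩
              {q : ℝ×ℝ | (2*k-1)*q.1 - 2*q.2 ≤ (2*k-1)*((2*k^2 - 7*k + 4)/2-k+2)}) := by
          ext q; simp only [Set.mem_setOf_eq, Set.mem_inter_iff]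
          constructor
          · rintro ⟨h1, h2, h3⟩; exact ⟨h1, by linarith, by linarith⟩
          · rintro ⟨h1, h2, h3⟩; exact ⟨h1, by linarith, by linarith⟩
        rw [e1]
        refine Convex.inter ?_ (Convex.inter ?_ ?_)
        · exact convex_halfSpace_ge ⟨fun _ _ => rfl, fun _ _ => rfl⟩ 0
        · exact convex_halfSpace_le
            ⟨fun u v => by simp [Prod.fst_add, Prod.snd_add]; ring,
             fun c u => by simp [Prod.smul_fst, Prod.smul_snd, smul_eq_mul]; ring⟩ 1
        · exact convex_halfSpace_le
            ⟨fun u v => by simp [Prod.fst_add, Prod.snd_add]; ring,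
             fun c u => by simp [Prod.smul_fst, Prod.smul_snd, smul_eq_mul]; ring⟩ _
    exact hsub hp
  · -- backward: construct convex combination
    rintro ⟨h1, h2, h3⟩
    obtain ⟨α, hα⟩ : ∃ α : ℝ, α = (2*k-3)*((2*k-1)*(2*k^2-9*k+8) + 4*p.2 - 2*(2*k-1)*p.1) /
        ((2*k-1)*((2*k-3)*(2*k^2-9*k+8)+2)) := ⟨_, rfl⟩
    obtain ⟨β, hβ⟩ : ∃ β : ℝ, β = (2*((2*k-3)*p.1 + 1 - (2*k-5)*p.2)) /
        ((2*k-3)*(2*k^2-9*k+8)+2) := ⟨_, rfl⟩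
    obtain ⟨γ, hγ⟩ : ∃ γ : ℝ, γ = 2*p.2/((k-2)*(2*k-1)) := ⟨_, rfl⟩
    have hα0 : 0 ≤ α := by
      rw [hα]
      apply div_nonneg _ (mul_pos hb hP2).le
      apply mul_nonneg ha.le
      nlinarith [h3]
    have hβ0 : 0 ≤ β := hβ ▸ div_nonneg (by linarith) hP2.le
    have hγ0 : 0 ≤ γ := hγ ▸ div_nonneg (by linarith) (mul_pos hk2 hb).le
    have hne1 : (2*k-3) ≠ 0 := ha.ne'
    have hne2 : (2*k-1) ≠ 0 := hb.ne'
    have hne3 : (k-2) ≠ 0 := hk2.ne'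
    have hne4 : ((2*k-3)*(2*k^2-9*k+8)+2) ≠ 0 := hP2.ne'
    have hsum : α + β + γ = 1 := by
      rw [hα, hβ, hγ]
      generalize hD : (2*k-3)*(2*k^2-9*k+8)+2 = D at hne4 ⊢
      field_simp
      subst hD
      ring
    have hxc : α * (-1/(2*k-3)) + β * ((2*k^2 - 7*k + 4)/2 - k + 2)
        + γ * ((2*k^2 - 7*k + 4)/2) = p.1 := by
      rw [hα, hβ, hγ]
      generalize hD : (2*k-3)*(2*k^2-9*k+8)+2 = D at hne4 ⊢
      field_simp
      subst hD
      ring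
    have hyc : γ * ((k-2)*(2*k-1)/2) = p.2 := by
      rw [hγ]
      field_simp
    have hw0 : ∀ i ∈ (Finset.univ : Finset (Fin 3)), 0 ≤ (![α, β, γ]) i := by
      intro i _
      fin_cases i
      · simpa using hα0
      · simpa using hβ0
      · simpa using hγ0
    have hws : ∑ i ∈ (Finset.univ : Finset (Fin 3)), (![α, β, γ]) i = 1 := by
      rw [Fin.sum_univ_three]
      simp only [Matrix.cons_val_zero, Matrix.cons_val_one, Matrix.head_cons,
        Matrix.cons_val_two, Matrix.tail_cons]
      linarith
    have hz : ∀ i ∈ (Finset.univ : Finset (Fin 3)),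
        (![(-1/(2*k-3), (0:ℝ)), ((2*k^2 - 7*k + 4)/2 - k + 2, 0),
          ((2*k^2 - 7*k + 4)/2, (k-2)*(2*k-1)/2)]) i ∈
        ({(-1/(2*k-3), 0), ((2*k^2 - 7*k + 4)/2 - k + 2, 0),
          ((2*k^2 - 7*k + 4)/2, (k-2)*(2*k-1)/2)} : Set (ℝ×ℝ)) := by
      intro i _
      fin_cases i <;> simp
    have key := Finset.centerMass_mem_convexHull (Finset.univ : Finset (Fin 3))
      hw0 (by rw [hws]; norm_num) hz
    have hcm : (Finset.univ : Finset (Fin 3)).centerMass (![α, β, γ])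
        (![(-1/(2*k-3), (0:ℝ)), ((2*k^2 - 7*k + 4)/2 - k + 2, 0),
          ((2*k^2 - 7*k + 4)/2, (k-2)*(2*k-1)/2)]) = p := by
      rw [Finset.centerMass_eq_of_sum_1 _ _ hws, Fin.sum_univ_three]
      simp only [Matrix.cons_val_zero, Matrix.cons_val_one, Matrix.head_cons,
        Matrix.cons_val_two, Matrix.tail_cons, Prod.smul_mk, smul_eq_mul, Prod.mk_add_mk]
      have hp : p = (p.1, p.2) := rfl
      rw [hp]
      refine Prod.ext ?_ ?_ <;> simp only
      · linarith [hxc]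
      · linarith [hyc]
    rwa [hcm] at key

lemma count_eq (n : ℕ) (hn : 1 ≤ n) :
    2 * (Set.ncard {z : ℤ × ℤ | 0 ≤ z.2 ∧ (4*(n:ℤ)-1)*z.2 ≤ (4*(n:ℤ)+1)*z.1 + 1 ∧
        (4*(n:ℤ)+3)*z.1 ≤ (4*(n:ℤ)+3)*(4*(n:ℤ)^2-(n:ℤ)-1) + 2*z.2} : ℤ)
      = (4*(n:ℤ)^2+(n:ℤ)-1) * ((4*(n:ℤ)^2+(n:ℤ)-1) + 1) + 2 := by
  have hN1 : (1:ℤ) ≤ (n:ℤ) := by exact_mod_cast hn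
  set N : ℤ := (n:ℤ) with hNdef
  have hb : (0:ℤ) < 4*N+3 := by linarith
  have hd : (0:ℤ) < 4*N+1 := by linarith
  set L : ℤ → ℤ := fun y => ((4*N-1)*(y+1))/(4*N+1) with hL
  set R : ℤ → ℤ := fun y => (4*N^2-N-1) + (2*y)/(4*N+3) with hR
  set F : Finset (ℤ×ℤ) := (Ico (0:ℤ) (N*(4*N+3)+1)).biUnion
    (fun y => (Finset.Icc (L y) (R y)).image (fun x => (x, y))) with hF
  -- equivalences
  have eqA : ∀ x y : ℤ, (L y ≤ x ↔ (4*N-1)*y ≤ (4*N+1)*x + 1) := by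
    intro x y
    rw [hL]
    simp only []
    rw [← Int.lt_add_one_iff, Int.ediv_lt_iff_lt_mul hd]
    constructor
    · intro h
      rw [← Int.lt_add_one_iff]
      nlinarith [h]
    · intro h
      nlinarith [h]
  have eqB : ∀ x y : ℤ, (x ≤ R y ↔ (4*N+3)*x ≤ (4*N+3)*(4*N^2-N-1) + 2*y) := by
    intro x y
    rw [hR]
    simp only []
    rw [show (4*N^2-N-1) + (2*y)/(4*N+3) = (2*y)/(4*N+3) + (4*N^2-N-1) from by ring,
      ← sub_le_iff_le_add, Int.le_ediv_iff_mul_le hb]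
    constructor
    · intro h; nlinarith [h]
    · intro h; nlinarith [h]
  -- y upper bound
  have eqY : ∀ x y : ℤ, (4*N-1)*y ≤ (4*N+1)*x + 1 →
      (4*N+3)*x ≤ (4*N+3)*(4*N^2-N-1) + 2*y → y ≤ N*(4*N+3) := by
    intro x y h2 h3
    by_contra hc
    push_neg at hc
    have H1 : (4*N+3)*((4*N-1)*y) ≤ (4*N+3)*((4*N+1)*x + 1) :=
      mul_le_mul_of_nonneg_left h2 (by linarith)
    have H2 : (4*N+1)*((4*N+3)*x) ≤ (4*N+1)*((4*N+3)*(4*N^2-N-1) + 2*y) :=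
      mul_le_mul_of_nonneg_left h3 (by linarith)
    have H3 : (16*N^2-5)*(N*(4*N+3)+1) ≤ (16*N^2-5)*y :=
      mul_le_mul_of_nonneg_left (by linarith) (by nlinarith)
    nlinarith [H1, H2, H3]
  -- nonemptiness bound
  have hLR : ∀ y : ℤ, 0 ≤ y → y ≤ N*(4*N+3) → L y ≤ R y + 1 := by
    intro y hy0 hyY
    have hq1 : (2*y)/(4*N+3) * (4*N+3) ≤ 2*y := Int.ediv_mul_le _ hb.ne'
    have hq2 : 2*y < ((2*y)/(4*N+3) + 1) * (4*N+3) := Int.lt_ediv_add_one_mul_self _ hb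
    have hgoal : (4*N-1)*(y+1) < ((4*N^2-N-1) + (2*y)/(4*N+3) + 2) * (4*N+1) := by
      by_contra hc
      push_neg at hc
      have H0 : (4*N+3)*(((4*N^2-N-1) + (2*y)/(4*N+3) + 2) * (4*N+1))
          ≤ (4*N+3)*((4*N-1)*(y+1)) := mul_le_mul_of_nonneg_left hc (by linarith)
      have S1 : (4*N+1)*(2*y) < (4*N+1)*(((2*y)/(4*N+3) + 1) * (4*N+3)) :=
        mul_lt_mul_of_pos_left hq2 hd
      have S2 : 0 ≤ (16*N^2-5)*(N*(4*N+3) - y) :=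
        mul_nonneg (by nlinarith) (by linarith)
      nlinarith [H0, S1, S2]
    rw [hL, hR]
    simp only []
    rw [← Int.lt_add_one_iff, Int.ediv_lt_iff_lt_mul hd]
    nlinarith [hgoal]
  -- set = F
  have hset : {z : ℤ × ℤ | 0 ≤ z.2 ∧ (4*N-1)*z.2 ≤ (4*N+1)*z.1 + 1 ∧
      (4*N+3)*z.1 ≤ (4*N+3)*(4*N^2-N-1) + 2*z.2} = (F : Set (ℤ×ℤ)) := by
    ext ⟨x, y⟩
    simp only [Set.mem_setOf_eq, hF, Finset.coe_biUnion, Set.mem_iUnion,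
      Finset.mem_coe, Finset.mem_Ico, Finset.mem_image, Finset.mem_Icc]
    constructor
    · rintro ⟨h1, h2, h3⟩
      refine ⟨y, ⟨h1, ?_⟩, x, ⟨(eqA x y).mpr h2, (eqB x y).mpr h3⟩, rfl⟩
      have := eqY x y h2 h3
      linarith
    · rintro ⟨y', ⟨hy0, hyY⟩, x', ⟨hx1, hx2⟩, heq⟩
      injection heq with hh1 hh2
      subst hh1; subst hh2
      exact ⟨hy0, (eqA x' y').mp hx1, (eqB x' y').mp hx2⟩
  rw [hset, Set.ncard_coe_finset]
  -- card computation
  have hdisj : ∀ y1 ∈ Ico (0:ℤ) (N*(4*N+3)+1), ∀ y2 ∈ Ico (0:ℤ) (N*(4*N+3)+1), y1 ≠ y2 →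
      Disjoint ((Finset.Icc (L y1) (R y1)).image (fun x => (x, y1)))
        ((Finset.Icc (L y2) (R y2)).image (fun x => (x, y2))) := by
    intro y1 _ y2 _ hne
    rw [Finset.disjoint_left]
    rintro ⟨x, y⟩ h1 h2
    simp only [Finset.mem_image] at h1 h2
    obtain ⟨x1, _, he1⟩ := h1
    obtain ⟨x2, _, he2⟩ := h2
    apply hne
    injection he1 with he1a he1b
    injection he2 with he2a he2b
    rw [he1b, he2b]
  rw [hF, Finset.card_biUnion hdisj]
  have hcard : ∀ y ∈ Ico (0:ℤ) (N*(4*N+3)+1),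
      (((Finset.Icc (L y) (R y)).image (fun x => (x, y))).card : ℤ) = R y + 1 - L y := by
    intro y hy
    rw [Finset.mem_Ico] at hy
    rw [Finset.card_image_of_injective _ (fun a b h => (Prod.mk.injEq _ _ _ _).mp h |>.1),
      Int.card_Icc, Int.toNat_of_nonneg (by linarith [hLR y hy.1 (by linarith [hy.2])])]
  push_cast
  rw [Finset.sum_congr rfl hcard]
  have hms := main_sum n hn
  rw [← hNdef] at hms
  calc 2 * ∑ y ∈ Ico (0:ℤ) (N*(4*N+3)+1), (R y + 1 - L y)
      = 2 * ∑ y ∈ Ico (0:ℤ) (N*(4*N+3)+1),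
          ((4*N^2 - N - 1) + 1 + (2*y)/(4*N+3) - ((4*N-1)*(y+1))/(4*N+1)) := by
        congr 1
        refine Finset.sum_congr rfl (fun y _ => ?_)
        rw [hL, hR]
        ring
    _ = (4*N^2+N-1) * ((4*N^2+N-1) + 1) + 2 := hms

theorem stmt2 (K : ℤ) (hK : 4 ≤ K) (hKeven : Even K)
    (a b : ℤ) (m : ℕ) (ha : a = 2 * K - 3) (hb : b = 2 * K - 1)
    (hm : 2 * (m : ℤ) = 2 * K ^ 2 - 7 * K + 4) :
    2 * Set.ncard {z : ℤ × ℤ |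
        ((z.1 : ℝ), (z.2 : ℝ)) ∈ convexHull ℝ
          ({(-1 / (a : ℝ), 0), ((m : ℝ) - (K : ℝ) + 2, 0),
            ((m : ℝ), ((K : ℝ) - 2) * (b : ℝ) / 2)} : Set (ℝ × ℝ))} =
      m * (m + 1) + 2 := by
  obtain ⟨r, hr⟩ := hKeven
  set n : ℕ := (r - 1).toNat with hndef
  have hNr : ((n:ℤ)) = r - 1 := Int.toNat_of_nonneg (by omega)
  have hn : 1 ≤ n := by omega
  have hK2 : K = 2*(n:ℤ) + 2 := by omega
  have hmZ : (m:ℤ) = 4*(n:ℤ)^2 + (n:ℤ) - 1 := by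
    rw [hK2] at hm
    ring_nf at hm ⊢
    linarith
  have hKR : (4:ℝ) ≤ (K:ℝ) := by exact_mod_cast hK
  have hmrR : 2*((m:ℝ)) = 2*(K:ℝ)^2 - 7*(K:ℝ) + 4 := by exact_mod_cast hm
  have haR : ((a:ℤ):ℝ) = 2*(K:ℝ) - 3 := by rw [ha]; push_cast; ring
  have hbR : ((b:ℤ):ℝ) = 2*(K:ℝ) - 1 := by rw [hb]; push_cast; ring
  have hset1 : {z : ℤ × ℤ |
        ((z.1 : ℝ), (z.2 : ℝ)) ∈ convexHull ℝ
          ({(-1 / (a : ℝ), 0), ((m : ℝ) - (K : ℝ) + 2, 0),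
            ((m : ℝ), ((K : ℝ) - 2) * (b : ℝ) / 2)} : Set (ℝ × ℝ))}
      = {z : ℤ × ℤ | 0 ≤ z.2 ∧ (4*(n:ℤ)-1)*z.2 ≤ (4*(n:ℤ)+1)*z.1 + 1 ∧
          (4*(n:ℤ)+3)*z.1 ≤ (4*(n:ℤ)+3)*(4*(n:ℤ)^2-(n:ℤ)-1) + 2*z.2} := by
    ext z
    simp only [Set.mem_setOf_eq]
    rw [haR, hbR, hull_char (K:ℝ) (m:ℝ) hKR hmrR ((z.1:ℝ), (z.2:ℝ))]
    dsimp only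
    constructor
    · rintro ⟨h1, h2, h3⟩
      have g1 : (0:ℤ) ≤ z.2 := by exact_mod_cast h1
      have g2 : (2*K-5)*z.2 ≤ (2*K-3)*z.1 + 1 := by exact_mod_cast h2
      have g3 : (2*K-1)*z.1 ≤ (2*K-1)*((m:ℤ)-K+2) + 2*z.2 := by exact_mod_cast h3
      rw [hK2] at g2
      rw [hK2, hmZ] at g3
      exact ⟨g1, by linarith, by linarith⟩
    · rintro ⟨h1, h2, h3⟩
      have g2 : (2*K-5)*z.2 ≤ (2*K-3)*z.1 + 1 := by rw [hK2]; linarith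
      have g3 : (2*K-1)*z.1 ≤ (2*K-1)*((m:ℤ)-K+2) + 2*z.2 := by rw [hK2, hmZ]; linarith
      refine ⟨by exact_mod_cast h1, by exact_mod_cast g2, by exact_mod_cast g3⟩
  rw [hset1]
  have hce := count_eq n hn
  have hfin : 2 * (Set.ncard {z : ℤ × ℤ | 0 ≤ z.2 ∧ (4*(n:ℤ)-1)*z.2 ≤ (4*(n:ℤ)+1)*z.1 + 1 ∧
      (4*(n:ℤ)+3)*z.1 ≤ (4*(n:ℤ)+3)*(4*(n:ℤ)^2-(n:ℤ)-1) + 2*z.2} : ℤ)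
      = (m:ℤ) * ((m:ℤ) + 1) + 2 := by
    rw [hce, hmZ]
  exact_mod_cast hfin
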